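/- Consider data ((f₀,f₁,f₂,f₃),(α₁,α₂,α₃)) ∈ (ℂ²)⁴ × ℂ³, where fⱼ=(uⱼ,vⱼ), and define the maps B₁ and B₂ as follows: B₁ replaces f₁ by (u₁ + (α₁−α₂)·u₀/(1−u₀·v₂), v₁ − (α₁−α₂)·v₂/(1−u₀·v₂)) and swaps α₁ ↔ α₂, leaving f₀,f₂,f₃,α₃ unchanged; B₂ replaces f₂ by (u₂ + (α₂−α₃)·u₁/(1−u₁·v₃), v₂ − (α₂−α₃)·v₃/(1−u₁·v₃)) and swaps α₂ ↔ α₃, leaving f₀,f₁,f₃,α₁ unchanged. Then the braid relation B₂ ∘ B₁ ∘ B₂ = B₁ ∘ B₂ ∘ B₁ holds, at every point where all denominators occurring in both composite maps are nonzero. -/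

import Mathlib

set_option maxHeartbeats 2000000


noncomputable section

/-- Data `((f₀,f₁,f₂,f₃),(α₁,α₂,α₃))` on four consecutive chain sites:
`fⱼ = (uⱼ,vⱼ) ∈ ℂ²` and edge parameters `α₁,α₂,α₃ ∈ ℂ`. -/
abbrev T : Type := (ℂ × ℂ) × (ℂ × ℂ) × (ℂ × ℂ) × (ℂ × ℂ) × (ℂ × ℂ × ℂ)

/-- The Adler–Yamilov transformation `B₁`: replaces `f₁` by
`(u₁ + (α₁−α₂)·u₀/(1−u₀·v₂), v₁ − (α₁−α₂)·v₂/(1−u₀·v₂))` and swaps `α₁ ↔ α₂`. -/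
def B1 (w : T) : T :=
  (w.1,
   (w.2.1.1 + (w.2.2.2.2.1 - w.2.2.2.2.2.1) * w.1.1 / (1 - w.1.1 * w.2.2.1.2),
    w.2.1.2 - (w.2.2.2.2.1 - w.2.2.2.2.2.1) * w.2.2.1.2 / (1 - w.1.1 * w.2.2.1.2)),
   w.2.2.1, w.2.2.2.1,
   (w.2.2.2.2.2.1, w.2.2.2.2.1, w.2.2.2.2.2.2))

/-- The Adler–Yamilov transformation `B₂`: replaces `f₂` by
`(u₂ + (α₂−α₃)·u₁/(1−u₁·v₃), v₂ − (α₂−α₃)·v₃/(1−u₁·v₃))` and swaps `α₂ ↔ α₃`. -/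
def B2 (w : T) : T :=
  (w.1, w.2.1,
   (w.2.2.1.1 + (w.2.2.2.2.2.1 - w.2.2.2.2.2.2) * w.2.1.1 / (1 - w.2.1.1 * w.2.2.2.1.2),
    w.2.2.1.2 - (w.2.2.2.2.2.1 - w.2.2.2.2.2.2) * w.2.2.2.1.2 / (1 - w.2.1.1 * w.2.2.2.1.2)),
   w.2.2.2.1,
   (w.2.2.2.2.1, w.2.2.2.2.2.2, w.2.2.2.2.2.1))

/-- The denominator of `B₁` is nonzero at `w`: `1 − u₀·v₂ ≠ 0`. -/
def D1 (w : T) : Prop := 1 - w.1.1 * w.2.2.1.2 ≠ 0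

/-- The denominator of `B₂` is nonzero at `w`: `1 − u₁·v₃ ≠ 0`. -/
def D2 (w : T) : Prop := 1 - w.2.1.1 * w.2.2.2.1.2 ≠ 0

/-- The braid relation `B₂ ∘ B₁ ∘ B₂ = B₁ ∘ B₂ ∘ B₁` for the Adler–Yamilov
transformations, at every point where all denominators occurring in both
composite maps are nonzero. -/
theorem braid_relation (w : T)
    (hL1 : D2 w) (hL2 : D1 (B2 w)) (hL3 : D2 (B1 (B2 w)))
    (hR1 : D1 w) (hR2 : D2 (B1 w)) (hR3 : D1 (B2 (B1 w))) :
    B2 (B1 (B2 w)) = B1 (B2 (B1 w)) := by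
  obtain ⟨⟨u0,v0⟩,⟨u1,v1⟩,⟨u2,v2⟩,⟨u3,v3⟩,a1,a2,a3⟩ := w
  simp only [B1, B2, D1, D2] at *
  have hA : (1 - u1*v3)*(1 - u0*v2) + (a2 - a3)*u0*v3 ≠ 0 := by
    have e : (1 - u1*v3)*(1 - u0*v2) + (a2 - a3)*u0*v3
        = (1 - u1*v3) * (1 - u0*(v2 - (a2 - a3)*v3/(1 - u1*v3))) := by
      field_simp
      ring
    exact e ▸ mul_ne_zero hL1 hL2
  have hB : (1 - u1*v3)*(1 - u0*v2) - (a1 - a2)*u0*v3 ≠ 0 := by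
    have e : (1 - u1*v3)*(1 - u0*v2) - (a1 - a2)*u0*v3
        = (1 - u0*v2) * (1 - (u1 + (a1 - a2)*u0/(1 - u0*v2))*v3) := by
      field_simp
      ring
    exact e ▸ mul_ne_zero hR1 hR2
  have hL1' : 1 - v3*u1 ≠ 0 := by rwa [mul_comm v3 u1]
  have hR1' : 1 - v2*u0 ≠ 0 := by rwa [mul_comm v2 u0]
  have eL2 : 1 - u0 * (v2 - (a2 - a3) * v3 / (1 - u1 * v3))
      = ((1 - u1*v3)*(1 - u0*v2) + (a2 - a3)*u0*v3) / (1 - u1*v3) := by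
    rw [eq_div_iff hL1]
    field_simp
    ring
  have eR2 : 1 - (u1 + (a1 - a2) * u0 / (1 - u0 * v2)) * v3
      = ((1 - u1*v3)*(1 - u0*v2) - (a1 - a2)*u0*v3) / (1 - u0*v2) := by
    rw [eq_div_iff hR1]
    field_simp
    ring
  set X := (1 - u1*v3)*(1 - u0*v2) + (a2 - a3)*u0*v3 with hX
  set Y := (1 - u1*v3)*(1 - u0*v2) - (a1 - a2)*u0*v3 with hY
  have eL3 : 1 - (u1 + (a1 - a3) * u0 / (1 - u0 * (v2 - (a2 - a3) * v3 / (1 - u1 * v3)))) * v3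
      = (1 - u1*v3) * ((1 - u1*v3)*(1 - u0*v2) - (a1 - a2)*u0*v3)
        / ((1 - u1*v3)*(1 - u0*v2) + (a2 - a3)*u0*v3) := by
    rw [eL2, div_div_eq_mul_div, eq_div_iff hA]
    field_simp
    simp only [hX, hY]
    ring
  have eR3 : 1 - u0 * (v2 - (a1 - a3) * v3 / (1 - (u1 + (a1 - a2) * u0 / (1 - u0 * v2)) * v3))
      = (1 - u0*v2) * ((1 - u1*v3)*(1 - u0*v2) + (a2 - a3)*u0*v3)
        / ((1 - u1*v3)*(1 - u0*v2) - (a1 - a2)*u0*v3) := by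
    rw [eR2, div_div_eq_mul_div, eq_div_iff hB]
    field_simp
    simp only [hX, hY]
    ring
  rw [← hX, ← hY] at eL3 eR3
  clear_value X Y
  refine Prod.ext rfl (Prod.ext (Prod.ext ?_ ?_) (Prod.ext (Prod.ext ?_ ?_) rfl)) <;>
    · rw [eL3, eR3, eL2, eR2]
      field_simp
      subst hX hY
      ring
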